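/- Consider the query-wise marking algorithm with cache size k running on a query sequence σ whose queries have cardinality l ≤ k, and fix a phase of the phase partition of σ. Let m be the number of new pages of that phase, i.e., pages requested during the phase that were not requested during the preceding phase. Then the expected number of cache misses incurred by the query-wise marking algorithm during that phase is at most m + m · ∑_{ℓ=m+1}^{k} 1/ℓ. -/

import Mathlib

open scoped Classical

variable {Ω : Type*}

/-- Expected number of cache misses of the query-wise marking algorithm serving queries
`Q t, Q (t+1), …, Q T`, starting with cache content `C` and marked set `M`.  At a time
`t` with `reset t` the marks are first cleared.  On a hit all pages of the query are
marked; on a miss a uniformly random set of `|Q t \ C|` unmarked cached pages outside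
the query is evicted, the query is inserted, and its pages are marked. -/
noncomputable def markExp [DecidableEq Ω] (Q : ℕ → Finset Ω) (reset : ℕ → Prop)
    (T t : ℕ) (C M : Finset Ω) : ℝ :=
  if ht : t ≤ T then
    let M₀ : Finset Ω := if reset t then ∅ else M
    if Q t ⊆ C then markExp Q reset T (t + 1) C (M₀ ∪ Q t)
    else
      let cand := ((C \ Q t) \ M₀).powersetCard ((Q t \ C).card)
      1 + (∑ E ∈ cand, markExp Q reset T (t + 1) ((C ∪ Q t) \ E) (M₀ ∪ Q t)) /
        (cand.card : ℝ)
  else 0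
termination_by T + 1 - t
decreasing_by all_goals omega

section Aux
open Finset

lemma aux_sum_union [DecidableEq Ω] (f : Finset Ω → ℝ) (V S : Finset Ω) (hS : S ⊆ V) (p : ℕ) :
    ∑ E₂ ∈ (V \ S).powersetCard p, f (S ∪ E₂)
      = ∑ E' ∈ (V.powersetCard (S.card + p)).filter (fun E' => S ⊆ E'), f E' := by
  refine Finset.sum_nbij' (fun E₂ => S ∪ E₂) (fun E' => E' \ S) ?_ ?_ ?_ ?_ ?_
  · intro E₂ hE₂
    simp only [mem_powersetCard] at hE₂
    obtain ⟨h1, h2⟩ := hE₂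
    have hd : Disjoint S E₂ := by
      refine Finset.disjoint_left.2 fun x hx hx2 => ?_
      exact (Finset.mem_sdiff.1 (h1 hx2)).2 hx
    simp only [mem_filter, mem_powersetCard]
    refine ⟨⟨?_, ?_⟩, subset_union_left⟩
    · exact union_subset hS (h1.trans sdiff_subset)
    · rw [card_union_of_disjoint hd, h2]
  · intro E' hE'
    simp only [mem_filter, mem_powersetCard] at hE'
    obtain ⟨⟨h1, h2⟩, h3⟩ := hE'
    simp only [mem_powersetCard]
    constructor
    · exact sdiff_subset_sdiff h1 le_rfl
    · rw [card_sdiff_of_subset h3, h2]; omega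
  · intro E₂ hE₂
    simp only [mem_powersetCard] at hE₂
    have hd : Disjoint S E₂ := by
      refine Finset.disjoint_left.2 fun x hx hx2 => ?_
      exact (Finset.mem_sdiff.1 (hE₂.1 hx2)).2 hx
    exact union_sdiff_cancel_left hd
  · intro E' hE'
    simp only [mem_filter, mem_powersetCard] at hE'
    exact union_sdiff_of_subset hE'.2
  · intro E₂ _; rfl


lemma aux_count_mem [DecidableEq Ω] (U : Finset Ω) (p : Ω) (hp : p ∈ U) (q : ℕ) :
    ((U.powersetCard (q + 1)).filter (fun E => p ∈ E)).card
      = (U.card - 1).choose q := by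
  rw [← card_erase_of_mem hp, ← Finset.card_powersetCard q (U.erase p)]
  refine Finset.card_nbij' (fun E => E.erase p) (fun F => insert p F) ?_ ?_ ?_ ?_
  · intro E hE
    simp only [Finset.mem_coe, mem_filter, mem_powersetCard] at hE ⊢
    obtain ⟨⟨h1, h2⟩, h3⟩ := hE
    exact ⟨erase_subset_erase p h1, by rw [card_erase_of_mem h3, h2]; omega⟩
  · intro F hF
    simp only [Finset.mem_coe, mem_filter, mem_powersetCard] at hF ⊢
    obtain ⟨h1, h2⟩ := hF
    have hpF : p ∉ F := fun h => (Finset.mem_erase.1 (h1 h)).1 rfl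
    refine ⟨⟨?_, ?_⟩, mem_insert_self p F⟩
    · exact insert_subset hp (h1.trans (erase_subset p U))
    · rw [card_insert_of_notMem hpF, h2]
  · intro E hE
    simp only [Finset.mem_coe, mem_filter] at hE
    exact insert_erase hE.2
  · intro F hF
    simp only [Finset.mem_coe, mem_powersetCard] at hF
    have hpF : p ∉ F := fun h => (Finset.mem_erase.1 (hF.1 h)).1 rfl
    exact erase_insert hpF


lemma aux_sum_inter [DecidableEq Ω] (U R : Finset Ω) (hR : R ⊆ U) (q : ℕ) :
    ∑ E ∈ U.powersetCard (q + 1), (E ∩ R).card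
      = R.card * (U.card - 1).choose q := by
  have h1 : ∀ E : Finset Ω, (E ∩ R).card = ∑ p ∈ R, if p ∈ E then 1 else 0 := by
    intro E
    rw [← Finset.card_filter]
    congr 1
    rw [Finset.filter_mem_eq_inter, inter_comm]
  simp_rw [h1]
  rw [Finset.sum_comm]
  have h2 : ∀ p ∈ R, (∑ E ∈ U.powersetCard (q + 1), if p ∈ E then 1 else 0)
      = (U.card - 1).choose q := by
    intro p hp
    rw [← Finset.sum_filter]
    simp only [Finset.sum_const, smul_eq_mul, mul_one]
    exact aux_count_mem U p (hR hp) q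
  rw [Finset.sum_congr rfl h2, Finset.sum_const, smul_eq_mul]


lemma aux_w [DecidableEq Ω] (U Q E' : Finset Ω) (q n : ℕ) (hE'sub : E' ⊆ U \ Q) (hE'card : E'.card = q + n)
    (hq' : q + n ≤ (U \ Q).card) :
    ∑ E ∈ (U.powersetCard q).filter (fun E => E \ Q ⊆ E'),
        (1 : ℝ) / (((U \ Q).card - (E \ Q).card).choose (q + n - (E \ Q).card))
      = (U.card.choose q : ℝ) / ((U \ Q).card.choose (q + n)) := by
  set u' := (U \ Q).card with hu'
  set r := (U ∩ Q).card with hr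
  set q' := q + n with hq'def
  -- Step A : bijection with pairs (S, T)
  have hA : ∑ E ∈ (U.powersetCard q).filter (fun E => E \ Q ⊆ E'),
        (1 : ℝ) / ((u' - (E \ Q).card).choose (q' - (E \ Q).card))
      = ∑ p ∈ ((E'.powerset ×ˢ (U ∩ Q).powerset).filter
          fun p => p.1.card + p.2.card = q),
        (1 : ℝ) / ((u' - p.1.card).choose (q' - p.1.card)) := by
    refine Finset.sum_nbij' (fun E => (E \ Q, E ∩ Q)) (fun p => p.1 ∪ p.2) ?_ ?_ ?_ ?_ ?_
    · intro E hE
      simp only [mem_filter, mem_powersetCard, mem_product, mem_powerset] at hE ⊢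
      obtain ⟨⟨h1, h2⟩, h3⟩ := hE
      refine ⟨⟨h3, inter_subset_inter h1 le_rfl⟩, ?_⟩
      rw [Finset.card_sdiff_add_card_inter, h2]
    · intro p hp
      simp only [mem_filter, mem_powersetCard, mem_product, mem_powerset] at hp ⊢
      obtain ⟨⟨h1, h2⟩, h3⟩ := hp
      have hSU : p.1 ⊆ U \ Q := h1.trans hE'sub
      have hd : Disjoint p.1 p.2 := by
        refine Finset.disjoint_left.2 fun x hx hx2 => ?_
        exact (Finset.mem_sdiff.1 (hSU hx)).2 (Finset.mem_inter.1 (h2 hx2)).2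
      have hS : p.1 \ Q = p.1 := by
        refine Finset.sdiff_eq_self_of_disjoint (Finset.disjoint_left.2 fun x hx hx2 => ?_)
        exact (Finset.mem_sdiff.1 (hSU hx)).2 hx2
      have hT : p.2 \ Q = ∅ := by
        rw [Finset.sdiff_eq_empty_iff_subset]
        exact h2.trans inter_subset_right
      refine ⟨⟨union_subset (hSU.trans sdiff_subset) (h2.trans inter_subset_left), ?_⟩, ?_⟩
      · rw [card_union_of_disjoint hd, h3]
      · rw [Finset.union_sdiff_distrib, hS, hT, union_empty]
        exact h1
    · intro E _
      exact Finset.sdiff_union_inter E Q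
    · intro p hp
      simp only [mem_filter, mem_product, mem_powerset] at hp
      obtain ⟨⟨h1, h2⟩, h3⟩ := hp
      have hSU : p.1 ⊆ U \ Q := h1.trans hE'sub
      have hS : p.1 \ Q = p.1 := by
        refine Finset.sdiff_eq_self_of_disjoint (Finset.disjoint_left.2 fun x hx hx2 => ?_)
        exact (Finset.mem_sdiff.1 (hSU hx)).2 hx2
      have hT : p.2 \ Q = ∅ := by
        rw [Finset.sdiff_eq_empty_iff_subset]; exact h2.trans inter_subset_right
      have hS2 : p.1 ∩ Q = ∅ := by
        rw [← Finset.disjoint_iff_inter_eq_empty]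
        exact Finset.disjoint_left.2 fun x hx hx2 => (Finset.mem_sdiff.1 (hSU hx)).2 hx2
      have hT2 : p.2 ∩ Q = p.2 := by
        rw [Finset.inter_eq_left]; exact h2.trans inter_subset_right
      ext1
      · simp only []
        rw [Finset.union_sdiff_distrib, hS, hT, union_empty]
      · simp only []
        rw [Finset.union_inter_distrib_right, hS2, hT2, empty_union]
    · intro E hE
      simp only [mem_filter, mem_powersetCard] at hE
      rfl
  rw [hA, Finset.sum_filter, Finset.sum_product]
  -- Step B : inner sum over T
  have hB : ∀ S ∈ E'.powerset,
      (∑ T ∈ (U ∩ Q).powerset, if S.card + T.card = q then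
          (1 : ℝ) / ((u' - S.card).choose (q' - S.card)) else 0)
      = (if S.card ≤ q then (r.choose (q - S.card) : ℝ) else 0)
          * ((1 : ℝ) / ((u' - S.card).choose (q' - S.card))) := by
    intro S _
    rw [← Finset.sum_filter]
    by_cases hle : S.card ≤ q
    · have : (U ∩ Q).powerset.filter (fun T => S.card + T.card = q)
          = (U ∩ Q).powersetCard (q - S.card) := by
        ext T
        simp only [mem_filter, mem_powerset, mem_powersetCard]
        constructor
        · rintro ⟨h1, h2⟩; exact ⟨h1, by omega⟩
        · rintro ⟨h1, h2⟩; exact ⟨h1, by omega⟩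
      rw [this, Finset.sum_const, Finset.card_powersetCard, if_pos hle, nsmul_eq_mul]
    · have : (U ∩ Q).powerset.filter (fun T => S.card + T.card = q) = ∅ := by
        refine Finset.filter_eq_empty_iff.2 fun T _ => ?_
        omega
      rw [this, Finset.sum_empty, if_neg hle, zero_mul]
  rw [Finset.sum_congr rfl hB]
  -- Step C : group by cardinality
  rw [Finset.sum_powerset_apply_card
    (f := fun j => (if j ≤ q then (r.choose (q - j) : ℝ) else 0)
      * ((1 : ℝ) / ((u' - j).choose (q' - j)))), hE'card]
  -- Step D : evaluate each term
  have hD : ∀ j ∈ Finset.range (q' + 1),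
      (q'.choose j) • ((if j ≤ q then (r.choose (q - j) : ℝ) else 0)
          * ((1 : ℝ) / ((u' - j).choose (q' - j))))
      = (if j ≤ q then ((u'.choose j * r.choose (q - j) : ℕ) : ℝ) else 0)
          / (u'.choose q') := by
    intro j hj
    rw [Finset.mem_range] at hj
    have hjq' : j ≤ q' := by omega
    by_cases hle : j ≤ q
    · rw [if_pos hle, if_pos hle]
      have key : (u'.choose q' * q'.choose j : ℝ) = (u'.choose j : ℝ) * ((u' - j).choose (q' - j)) := by
        exact_mod_cast congrArg Nat.cast (Nat.choose_mul (n := u') hjq')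
      have h1 : ((u' - j).choose (q' - j) : ℝ) ≠ 0 := by
        have : 0 < (u' - j).choose (q' - j) := Nat.choose_pos (by omega)
        positivity
      have h2 : (u'.choose q' : ℝ) ≠ 0 := by
        have : 0 < u'.choose q' := Nat.choose_pos hq'
        positivity
      rw [nsmul_eq_mul]
      push_cast
      field_simp
      nlinarith [key]
    · rw [if_neg hle, if_neg hle, zero_mul, smul_zero, zero_div]
  rw [Finset.sum_congr rfl hD, ← Finset.sum_div]
  congr 1
  rw [← Finset.sum_filter]
  have hfil : (Finset.range (q' + 1)).filter (fun j => j ≤ q) = Finset.range (q + 1) := by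
    ext j
    simp only [mem_filter, mem_range]
    omega
  rw [hfil]
  have hV : U.card.choose q = ∑ j ∈ Finset.range (q + 1), u'.choose j * r.choose (q - j) := by
    have hcard : u' + r = U.card := Finset.card_sdiff_add_card_inter U Q
    rw [← hcard, Nat.add_choose_eq, Finset.Nat.sum_antidiagonal_eq_sum_range_succ_mk]
  rw [hV]
  push_cast
  ring


lemma aux_step [DecidableEq Ω] (f : Finset Ω → ℝ) (U Q : Finset Ω) (q n : ℕ) (h : q + n ≤ (U \ Q).card) :
    ∑ E ∈ U.powersetCard q,
        (∑ E₂ ∈ ((U \ Q) \ E).powersetCard (q + n - (E \ Q).card), f ((E \ Q) ∪ E₂))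
          / ((((U \ Q) \ E).powersetCard (q + n - (E \ Q).card)).card : ℝ)
      = (U.card.choose q : ℝ) / ((U \ Q).card.choose (q + n))
          * ∑ E' ∈ (U \ Q).powersetCard (q + n), f E' := by
  have key : ∀ E ∈ U.powersetCard q,
      (∑ E₂ ∈ ((U \ Q) \ E).powersetCard (q + n - (E \ Q).card), f ((E \ Q) ∪ E₂))
        / ((((U \ Q) \ E).powersetCard (q + n - (E \ Q).card)).card : ℝ)
      = ∑ E' ∈ ((U \ Q).powersetCard (q + n)).filter (fun E' => E \ Q ⊆ E'),
          f E' * ((1 : ℝ)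
            / (((U \ Q).card - (E \ Q).card).choose (q + n - (E \ Q).card))) := by
    intro E hE
    obtain ⟨hEU, hEcard⟩ := mem_powersetCard.1 hE
    have hj : (E \ Q).card ≤ q := hEcard ▸ card_le_card sdiff_subset
    have hEQ : E \ Q ⊆ U \ Q := sdiff_subset_sdiff hEU le_rfl
    have hset : (U \ Q) \ E = (U \ Q) \ (E \ Q) := by
      ext x; simp only [mem_sdiff]; tauto
    have hcard2 : ((U \ Q) \ E).card = (U \ Q).card - (E \ Q).card := by
      rw [hset, card_sdiff_of_subset hEQ]
    have hexp : (E \ Q).card + (q + n - (E \ Q).card) = q + n := by omega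
    rw [hset, aux_sum_union f (U \ Q) (E \ Q) hEQ (q + n - (E \ Q).card), hexp,
      Finset.card_powersetCard, ← hset, hcard2, Finset.sum_div]
    exact Finset.sum_congr rfl fun _ _ => by rw [one_div, div_eq_mul_inv]
  rw [Finset.sum_congr rfl key]
  rw [Finset.sum_congr rfl (fun E _ => Finset.sum_filter _ _), Finset.sum_comm]
  have key2 : ∀ E' ∈ (U \ Q).powersetCard (q + n),
      (∑ E ∈ U.powersetCard q, if E \ Q ⊆ E' then
          f E' * ((1 : ℝ)
            / (((U \ Q).card - (E \ Q).card).choose (q + n - (E \ Q).card))) else 0)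
      = f E' * ((U.card.choose q : ℝ) / ((U \ Q).card.choose (q + n))) := by
    intro E' hE'
    obtain ⟨h1, h2⟩ := mem_powersetCard.1 hE'
    rw [← Finset.sum_filter, ← Finset.mul_sum, aux_w U Q E' q n h1 h2 h]
  rw [Finset.sum_congr rfl key2, ← Finset.sum_mul]
  ring


lemma markExp_stop [DecidableEq Ω] (Q : ℕ → Finset Ω) (T t : ℕ) (C M : Finset Ω) (h : ¬ t ≤ T) :
    markExp Q (fun _ => False) T t C M = 0 := by
  rw [markExp, dif_neg h]

lemma markExp_unfold [DecidableEq Ω] (Q : ℕ → Finset Ω) (T t : ℕ) (C M : Finset Ω) (h : t ≤ T) :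
    markExp Q (fun _ => False) T t C M =
      if Q t ⊆ C then markExp Q (fun _ => False) T (t + 1) C (M ∪ Q t)
      else 1 + (∑ E ∈ ((C \ Q t) \ M).powersetCard ((Q t \ C).card),
          markExp Q (fun _ => False) T (t + 1) ((C ∪ Q t) \ E) (M ∪ Q t)) /
        ((((C \ Q t) \ M).powersetCard ((Q t \ C).card)).card : ℝ) := by
  rw [markExp, dif_pos h]
  simp

end Aux

open Finset in
set_option maxHeartbeats 2000000 in
/-- Per-phase bound for the query-wise marking algorithm: on a phase `[a, b]` of the
phase partition whose preceding phase is `[a', a-1]` (requesting exactly `k` distinct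
pages, which form the cache at the start of the phase), if the phase has `m` new pages
then the expected number of cache misses during the phase is at most
`m + m * ∑_{ℓ = m+1}^{k} 1/ℓ`. -/
theorem stmt5 [DecidableEq Ω] (l k : ℕ) (hl : 0 < l) (hlk : l ≤ k)
    (Q : ℕ → Finset Ω) (a' a b : ℕ) (ha' : 1 ≤ a') (ha : a' < a) (hb : a ≤ b)
    (hQ : ∀ t, 1 ≤ t → t ≤ b → (Q t).card = l)
    (hprev : ((Finset.Icc a' (a - 1)).biUnion Q).card = k)
    (hphase : ((Finset.Icc a b).biUnion Q).card ≤ k)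
    (m : ℕ)
    (hm : m = (((Finset.Icc a b).biUnion Q) \ ((Finset.Icc a' (a - 1)).biUnion Q)).card) :
    markExp Q (fun _ => False) b a ((Finset.Icc a' (a - 1)).biUnion Q) ∅ ≤
      m + m * ∑ ℓ ∈ Finset.Icc (m + 1) k, (1 : ℝ) / ℓ := by

  set O := (Finset.Icc a' (a - 1)).biUnion Q with hO
  set P := (Finset.Icc a b).biUnion Q with hP
  -- generic facts about the prefix unions
  have hMP : ∀ t, t ≤ b + 1 → (Finset.Ico a t).biUnion Q ⊆ P := by
    intro t ht
    apply Finset.biUnion_subset_biUnion_of_subset_left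
    intro x hx
    rw [Finset.mem_Ico] at hx
    rw [Finset.mem_Icc]
    omega
  have hq_le_m : ∀ t, t ≤ b + 1 → (((Finset.Ico a t).biUnion Q) \ O).card ≤ m := by
    intro t ht
    rw [hm]
    exact card_le_card (sdiff_subset_sdiff (hMP t ht) le_rfl)
  have hm_le_u : ∀ t, t ≤ b + 1 → m ≤ (O \ (Finset.Ico a t).biUnion Q).card := by
    intro t ht
    have h1 : (O \ (Finset.Ico a t).biUnion Q).card
        + (O ∩ (Finset.Ico a t).biUnion Q).card = k := by
      rw [Finset.card_sdiff_add_card_inter, hprev]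
    have h2 : (O ∩ (Finset.Ico a t).biUnion Q).card ≤ (P ∩ O).card := by
      apply card_le_card
      intro x hx
      rw [Finset.mem_inter] at hx ⊢
      exact ⟨hMP t ht hx.2, hx.1⟩
    have h3 : (P ∩ O).card + m = P.card := by
      rw [hm]; exact Finset.card_inter_add_card_sdiff P O
    omega
  -- the main induction
  have key : ∀ j t, a ≤ t → t + j = b + 1 →
      (∑ E ∈ ((O \ (Finset.Ico a t).biUnion Q).powersetCard
            ((((Finset.Ico a t).biUnion Q) \ O).card)),
          markExp Q (fun _ => False) b t ((O ∪ (Finset.Ico a t).biUnion Q) \ E)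
            ((Finset.Ico a t).biUnion Q))
        / ((O \ (Finset.Ico a t).biUnion Q).card.choose
            ((((Finset.Ico a t).biUnion Q) \ O).card) : ℝ)
      ≤ ((m - (((Finset.Ico a t).biUnion Q) \ O).card : ℕ) : ℝ)
        + m * ∑ ℓ ∈ Finset.Icc (m + 1) ((O \ (Finset.Ico a t).biUnion Q).card),
            (1 : ℝ) / ℓ := by
    intro j
    induction j with
    | zero =>
      intro t ht hteq
      have hstop : ∀ E ∈ ((O \ (Finset.Ico a t).biUnion Q).powersetCard
            ((((Finset.Ico a t).biUnion Q) \ O).card)),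
          markExp Q (fun _ => False) b t ((O ∪ (Finset.Ico a t).biUnion Q) \ E)
            ((Finset.Ico a t).biUnion Q) = 0 := by
        intro E _
        exact markExp_stop Q b t _ _ (by omega)
      rw [Finset.sum_congr rfl hstop, Finset.sum_const_zero, zero_div]
      have h1 : (0:ℝ) ≤ ((m - (((Finset.Ico a t).biUnion Q) \ O).card : ℕ) : ℝ) :=
        Nat.cast_nonneg _
      have h2 : (0:ℝ) ≤ ∑ ℓ ∈ Finset.Icc (m + 1) ((O \ (Finset.Ico a t).biUnion Q).card),
          (1 : ℝ) / ℓ := by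
        apply Finset.sum_nonneg
        intro ℓ _
        positivity
      nlinarith [Nat.cast_nonneg (α := ℝ) m]
    | succ j ih =>
      intro t ht hteq
      have htb : t ≤ b := by omega
      set M := (Finset.Ico a t).biUnion Q with hMdef
      set M' := (Finset.Ico a (t+1)).biUnion Q with hM'def
      have hM' : M' = M ∪ Q t := by
        rw [hM'def, Nat.Ico_succ_right_eq_insert_Ico ht, Finset.biUnion_insert, union_comm, hMdef]
      set q := (M \ O).card with hqdef
      set n := (Q t \ (O ∪ M)).card with hndef
      set U := O \ M with hUdef
      have hq'set : M' \ O = (M \ O) ∪ (Q t \ (O ∪ M)) := by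
        ext x; simp only [hM', mem_sdiff, mem_union]; tauto
      have hq' : (M' \ O).card = q + n := by
        rw [hq'set, card_union_of_disjoint]
        refine disjoint_left.2 fun x hx hx2 => ?_
        exact (mem_sdiff.1 hx2).2 (mem_union_right _ (mem_sdiff.1 hx).1)
      have hU' : O \ M' = U \ Q t := by
        ext x; simp only [hM', hUdef, mem_sdiff, mem_union]; tauto
      have hqm : q ≤ m := hq_le_m t (by omega)
      have hq'm : q + n ≤ m := by rw [← hq']; exact hq_le_m (t+1) (by omega)
      have hmu : m ≤ U.card := hm_le_u t (by omega)
      have hmu' : m ≤ (U \ Q t).card := by rw [← hU']; exact hm_le_u (t+1) (by omega)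
      have hqn_le : q + n ≤ (U \ Q t).card := le_trans hq'm hmu'
      have huu' : (U \ Q t).card ≤ U.card := card_le_card sdiff_subset
      have hqU : q ≤ U.card := le_trans hqm hmu
      have hCuq : (0:ℝ) < (U.card.choose q : ℝ) := by exact_mod_cast Nat.choose_pos hqU
      have hCu'q' : (0:ℝ) < ((U \ Q t).card.choose (q+n) : ℝ) := by
        exact_mod_cast Nat.choose_pos hqn_le
      have hbody : ∀ E ∈ U.powersetCard q,
          markExp Q (fun _ => False) b t ((O ∪ M) \ E) M
          = (if Q t ⊆ (O ∪ M) \ E then (0:ℝ) else 1)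
            + (∑ E₂ ∈ ((U \ Q t) \ E).powersetCard (q + n - (E \ Q t).card),
                markExp Q (fun _ => False) b (t+1) ((O ∪ M') \ ((E \ Q t) ∪ E₂)) M')
              / ((((U \ Q t) \ E).powersetCard (q + n - (E \ Q t).card)).card : ℝ) := by
        intro E hE
        obtain ⟨hEU, hEcard⟩ := mem_powersetCard.1 hE
        have hEO : E ⊆ O := hEU.trans sdiff_subset
        have hjle : (E \ Q t).card ≤ q := by rw [← hEcard]; exact card_le_card sdiff_subset
        rw [markExp_unfold Q b t _ _ htb]
        by_cases hhit : Q t ⊆ (O ∪ M) \ E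
        · rw [if_pos hhit, if_pos hhit]
          have hQOM : Q t ⊆ O ∪ M := hhit.trans sdiff_subset
          have hn0 : n = 0 := by
            rw [hndef, Finset.card_eq_zero, Finset.sdiff_eq_empty_iff_subset]
            exact hQOM
          have hEQt : E \ Q t = E := by
            rw [Finset.sdiff_eq_self_iff_disjoint]
            refine disjoint_left.2 fun x hx hx2 => ?_
            exact (mem_sdiff.1 (hhit hx2)).2 hx
          have hOM' : O ∪ M' = O ∪ M := by
            rw [hM', ← union_assoc, union_eq_left]
            exact hQOM
          have hexp : q + n - (E \ Q t).card = 0 := by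
            rw [hEQt, hEcard]; omega
          rw [hexp, hEQt, Finset.powersetCard_zero, Finset.sum_singleton,
            Finset.card_singleton, union_empty, hOM', zero_add, Nat.cast_one, div_one, hM']
        · rw [if_neg hhit, if_neg hhit]
          have hcand : (((O ∪ M) \ E) \ Q t) \ M = (U \ Q t) \ E := by
            ext x; simp only [hUdef, mem_sdiff, mem_union]; tauto
          have hmisscard : (Q t \ ((O ∪ M) \ E)).card = q + n - (E \ Q t).card := by
            have hsplit : Q t \ ((O ∪ M) \ E) = (Q t \ (O ∪ M)) ∪ (Q t ∩ E) := by
              ext x; simp only [mem_sdiff, mem_union, mem_inter]; tauto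
            have hdisj : Disjoint (Q t \ (O ∪ M)) (Q t ∩ E) := by
              refine disjoint_left.2 fun x hx hx2 => ?_
              exact (mem_sdiff.1 hx).2 (mem_union_left _ (hEO (mem_inter.1 hx2).2))
            have hEsplit : (E \ Q t).card + (E ∩ Q t).card = q := by
              rw [Finset.card_sdiff_add_card_inter, hEcard]
            rw [hsplit, card_union_of_disjoint hdisj, inter_comm]
            omega
          have hcont : ∀ E₂ : Finset Ω, (((O ∪ M) \ E) ∪ Q t) \ E₂
              = (O ∪ M') \ ((E \ Q t) ∪ E₂) := by
            intro E₂; ext x; simp only [hM', mem_sdiff, mem_union]; tauto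
          rw [hcand, hmisscard]
          congr 2
          · exact Finset.sum_congr rfl fun E₂ _ => by rw [hcont E₂, hM']
      rw [Finset.sum_congr rfl hbody, Finset.sum_add_distrib, add_div]
      have hScont : (∑ E ∈ U.powersetCard q,
            (∑ E₂ ∈ ((U \ Q t) \ E).powersetCard (q + n - (E \ Q t).card),
                markExp Q (fun _ => False) b (t+1) ((O ∪ M') \ ((E \ Q t) ∪ E₂)) M')
              / ((((U \ Q t) \ E).powersetCard (q + n - (E \ Q t).card)).card : ℝ))
            / (U.card.choose q : ℝ)
          = (∑ E' ∈ (U \ Q t).powersetCard (q + n),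
              markExp Q (fun _ => False) b (t+1) ((O ∪ M') \ E') M')
            / ((U \ Q t).card.choose (q + n) : ℝ) := by
        rw [aux_step (fun E' => markExp Q (fun _ => False) b (t+1) ((O ∪ M') \ E') M')
          U (Q t) q n hqn_le]
        field_simp
      rw [hScont]
      specialize ih (t+1) (by omega) (by omega)
      rw [← hM'def] at ih
      rw [hq', hU'] at ih
      -- Now combine:  A + S ≤ RHS with S ≤ ih's RHS
      have hIcc : ∀ x : ℕ, Finset.Icc (m+1) x = Finset.Ioc m x := by
        intro x; ext y; simp only [Finset.mem_Icc, Finset.mem_Ioc]; omega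
      have hSu'Su : ∑ ℓ ∈ Finset.Icc (m + 1) ((U \ Q t).card), (1:ℝ)/ℓ
          ≤ ∑ ℓ ∈ Finset.Icc (m + 1) U.card, (1:ℝ)/ℓ := by
        apply Finset.sum_le_sum_of_subset_of_nonneg (Finset.Icc_subset_Icc_right huu')
        intro i _ _; positivity
      have hAbound : (∑ E ∈ U.powersetCard q,
            if Q t ⊆ (O ∪ M) \ E then (0:ℝ) else 1) / (U.card.choose q : ℝ)
          + (((m - (q + n) : ℕ)) : ℝ)
          + m * ∑ ℓ ∈ Finset.Icc (m + 1) ((U \ Q t).card), (1:ℝ)/ℓ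
          ≤ (((m - q : ℕ)) : ℝ) + m * ∑ ℓ ∈ Finset.Icc (m + 1) U.card, (1:ℝ)/ℓ := by
        rcases Nat.eq_zero_or_pos n with hn0 | hnpos
        · -- no new pages requested at time t
          have hQe : Q t \ (O ∪ M) = ∅ := by
            rw [← Finset.card_eq_zero, ← hndef]; exact hn0
          have hQOM : Q t ⊆ O ∪ M := Finset.sdiff_eq_empty_iff_subset.1 hQe
          have hsub0 : (m - (q + n) : ℕ) = (m - q : ℕ) := by omega
          rw [hsub0]
          rcases Nat.eq_zero_or_pos q with hq0 | hqpos
          · have hnum0 : (∑ E ∈ U.powersetCard q,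
                if Q t ⊆ (O ∪ M) \ E then (0:ℝ) else 1) = 0 := by
              rw [hq0, Finset.powersetCard_zero, Finset.sum_singleton,
                if_pos (by rw [Finset.sdiff_empty]; exact hQOM)]
            rw [hnum0, zero_div]
            have := mul_le_mul_of_nonneg_left hSu'Su (Nat.cast_nonneg (α := ℝ) m)
            linarith
          · have hsum_le : (∑ E ∈ U.powersetCard q, if Q t ⊆ (O ∪ M) \ E then (0:ℝ) else 1)
                ≤ ∑ E ∈ U.powersetCard q, ((E ∩ (U ∩ Q t)).card : ℝ) := by
              apply Finset.sum_le_sum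
              intro E hE
              obtain ⟨hEU, _⟩ := mem_powersetCard.1 hE
              split_ifs with hh
              · positivity
              · obtain ⟨x, hxQ, hxC⟩ := Finset.not_subset.1 hh
                have hxOM : x ∈ O ∪ M := hQOM hxQ
                have hxE : x ∈ E := by
                  by_contra hxe
                  exact hxC (mem_sdiff.2 ⟨hxOM, hxe⟩)
                have hxmem : x ∈ E ∩ (U ∩ Q t) :=
                  mem_inter.2 ⟨hxE, mem_inter.2 ⟨hEU hxE, hxQ⟩⟩
                have hpos : 0 < (E ∩ (U ∩ Q t)).card := card_pos.2 ⟨x, hxmem⟩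
                exact_mod_cast hpos
            have hsum_eq : ∑ E ∈ U.powersetCard q, ((E ∩ (U ∩ Q t)).card : ℝ)
                = (((U ∩ Q t).card * (U.card - 1).choose (q - 1) : ℕ) : ℝ) := by
              rw [← Nat.cast_sum]
              congr 1
              have h5 := aux_sum_inter U (U ∩ Q t) inter_subset_left (q - 1)
              rw [show q - 1 + 1 = q from by omega] at h5
              exact h5
            have hupos : 1 ≤ U.card := le_trans hqpos hqU
            have hch : U.card * ((U.card - 1).choose (q - 1)) = q * (U.card.choose q) := by
              have h6 := Nat.add_one_mul_choose_eq (U.card - 1) (q - 1)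
              rw [show U.card - 1 + 1 = U.card from by omega,
                show q - 1 + 1 = q from by omega] at h6
              rw [h6]; ring
            have hchR : (U.card : ℝ) * ((U.card - 1).choose (q - 1))
                = q * (U.card.choose q) := by exact_mod_cast hch
            have hupos' : (0:ℝ) < U.card := by exact_mod_cast hupos
            have hA : (∑ E ∈ U.powersetCard q,
                  if Q t ⊆ (O ∪ M) \ E then (0:ℝ) else 1) / (U.card.choose q : ℝ)
                ≤ ((U ∩ Q t).card * q : ℝ) / U.card := by
              rw [div_le_div_iff₀ hCuq hupos']
              calc (∑ E ∈ U.powersetCard q,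
                    if Q t ⊆ (O ∪ M) \ E then (0:ℝ) else 1) * (U.card : ℝ)
                  ≤ (((U ∩ Q t).card * (U.card - 1).choose (q - 1) : ℕ) : ℝ) * U.card := by
                    exact mul_le_mul_of_nonneg_right (hsum_le.trans hsum_eq.le)
                      (le_of_lt hupos')
                _ = ((U ∩ Q t).card * q : ℝ) * (U.card.choose q : ℝ) := by
                    push_cast
                    linear_combination ((U ∩ Q t).card : ℝ) * hchR
            have hru : U.card - (U \ Q t).card = (U ∩ Q t).card := by
              have h7 := Finset.card_sdiff_add_card_inter U (Q t)
              omega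
            have hsplit : ∑ ℓ ∈ Finset.Icc (m + 1) U.card, (1:ℝ)/ℓ
                = (∑ ℓ ∈ Finset.Icc (m + 1) ((U \ Q t).card), (1:ℝ)/ℓ)
                  + ∑ ℓ ∈ Finset.Ioc ((U \ Q t).card) U.card, (1:ℝ)/ℓ := by
              rw [hIcc, hIcc]
              exact (Finset.sum_Ioc_consecutive _ hmu' huu').symm
            have htail : ((U ∩ Q t).card : ℝ) * (1 / U.card)
                ≤ ∑ ℓ ∈ Finset.Ioc ((U \ Q t).card) U.card, (1:ℝ)/ℓ := by
              have hcard : (Finset.Ioc ((U \ Q t).card) U.card).card = (U ∩ Q t).card := by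
                rw [Nat.card_Ioc]; omega
              have h8 := Finset.card_nsmul_le_sum (Finset.Ioc ((U \ Q t).card) U.card)
                (fun ℓ => (1:ℝ)/ℓ) (1 / (U.card : ℝ)) ?_
              · rw [hcard, nsmul_eq_mul] at h8
                exact h8
              · intro x hx
                rw [Finset.mem_Ioc] at hx
                apply one_div_le_one_div_of_le
                · exact_mod_cast (show (0:ℕ) < x by omega)
                · exact_mod_cast hx.2
            have hqmr : ((U ∩ Q t).card * q : ℝ) / U.card
                ≤ ((U ∩ Q t).card * m : ℝ) / U.card := by
              have h10 : ((U ∩ Q t).card * q : ℝ) ≤ ((U ∩ Q t).card * m : ℝ) := by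
                exact_mod_cast Nat.mul_le_mul_left _ hqm
              exact (div_le_div_iff_of_pos_right hupos').2 h10
            have hfin : ((U ∩ Q t).card * m : ℝ) / U.card
                ≤ m * ∑ ℓ ∈ Finset.Ioc ((U \ Q t).card) U.card, (1:ℝ)/ℓ := by
              have h9 := mul_le_mul_of_nonneg_left htail (Nat.cast_nonneg (α := ℝ) m)
              calc ((U ∩ Q t).card * m : ℝ) / U.card
                  = m * (((U ∩ Q t).card : ℝ) * (1 / U.card)) := by ring
                _ ≤ _ := h9
            have hAfin := (hA.trans hqmr).trans hfin
            rw [hsplit]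
            linarith
        · -- at least one new page : certain miss, pay 1 ≤ n
          have h1 : (∑ E ∈ U.powersetCard q, if Q t ⊆ (O ∪ M) \ E then (0:ℝ) else 1)
              ≤ (U.card.choose q : ℝ) := by
            calc (∑ E ∈ U.powersetCard q, if Q t ⊆ (O ∪ M) \ E then (0:ℝ) else 1)
                ≤ ∑ _E ∈ U.powersetCard q, (1:ℝ) := by
                  apply Finset.sum_le_sum
                  intro E _
                  split <;> norm_num
              _ = (U.card.choose q : ℝ) := by
                  rw [Finset.sum_const, nsmul_eq_mul, mul_one, Finset.card_powersetCard]
          have hA1 : (∑ E ∈ U.powersetCard q,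
              if Q t ⊆ (O ∪ M) \ E then (0:ℝ) else 1) / (U.card.choose q : ℝ) ≤ 1 := by
            rw [div_le_one hCuq]; exact h1
          have hcast : ((m - q : ℕ) : ℝ) = ((m - (q + n) : ℕ) : ℝ) + n := by
            have h2 : (m - (q + n)) + n = m - q := by omega
            rw [← h2]
            push_cast
            ring
          have hn1 : (1:ℝ) ≤ n := by exact_mod_cast hnpos
          have hmSu : (m:ℝ) * ∑ ℓ ∈ Finset.Icc (m + 1) ((U \ Q t).card), (1:ℝ)/ℓ
              ≤ m * ∑ ℓ ∈ Finset.Icc (m + 1) U.card, (1:ℝ)/ℓ :=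
            mul_le_mul_of_nonneg_left hSu'Su (Nat.cast_nonneg m)
          linarith
      calc _ ≤ (∑ E ∈ U.powersetCard q,
            if Q t ⊆ (O ∪ M) \ E then (0:ℝ) else 1) / (U.card.choose q : ℝ)
            + ((((m - (q + n) : ℕ)) : ℝ)
              + m * ∑ ℓ ∈ Finset.Icc (m + 1) ((U \ Q t).card), (1:ℝ)/ℓ) := by
              exact add_le_add_right ih _
        _ ≤ _ := by linarith [hAbound]
  have h0 : (Finset.Ico a a).biUnion Q = (∅ : Finset Ω) := by
    rw [Finset.Ico_self, Finset.biUnion_empty]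
  have := key (b + 1 - a) a le_rfl (by omega)
  rw [h0] at this
  simp only [Finset.sdiff_empty, Finset.empty_sdiff, Finset.card_empty, Finset.union_empty,
    Finset.powersetCard_zero, Nat.choose_zero_right, Nat.cast_one, div_one, Nat.sub_zero,
    Finset.sum_singleton] at this
  rw [hprev] at this
  simpa using this
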